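/- Let G be a chair-free graph containing an induced 5-cycle C = v1...v5. If u,v ∈ S₄(i) are nonadjacent and s ∈ S¹₃(i+1) ∪ S¹₃(i−1) ∪ S²₃(i) ∪ S₄(i+1) ∪ S₄(i−1) ∪ S₅, then s is adjacent to at least one of u, v. -/

import Mathlib

open SimpleGraph

/-- The chair: a `P₄` (0-1-2-3) with an extra vertex 4 adjacent to the middle vertex 2. -/
def chair : SimpleGraph (Fin 5) :=
  SimpleGraph.fromRel (fun a b => (a, b) ∈ [((0 : Fin 5), (1 : Fin 5)), (1, 2), (2, 3), (2, 4)])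

/-- The cycle on five vertices. -/
def cycle5 : SimpleGraph (Fin 5) :=
  SimpleGraph.fromRel (fun a b => b = a + 1)

/-- `G` contains an induced copy of `H`. -/
def HasInducedCopy {α V : Type*} (H : SimpleGraph α) (G : SimpleGraph V) : Prop :=
  ∃ f : α → V, Function.Injective f ∧ ∀ a b, G.Adj (f a) (f b) ↔ H.Adj a b

/-- `G` is `k`-vertex-critical. -/
def IsVertexCritical {V : Type*} (G : SimpleGraph V) (k : ℕ) : Prop :=
  G.chromaticNumber = k ∧ ∀ x : V, (G.induce {x}ᶜ).chromaticNumber < k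

/-- `v : Fin 5 → V` is an induced five-cycle in `G`. -/
def IsInducedC5 {V : Type*} (G : SimpleGraph V) (v : Fin 5 → V) : Prop :=
  Function.Injective v ∧ ∀ i j, G.Adj (v i) (v j) ↔ cycle5.Adj i j

/-- Vertices outside `C` whose neighbourhood on `C` is `{v (i-1), v i, v (i+1)}`. -/
def S13 {V : Type*} (G : SimpleGraph V) (v : Fin 5 → V) (i : Fin 5) : Set V :=
  {x | x ∉ Set.range v ∧ ∀ j, G.Adj x (v j) ↔ (j = i - 1 ∨ j = i ∨ j = i + 1)}

/-- Vertices outside `C` whose neighbourhood on `C` is `{v (i-2), v i, v (i+2)}`. -/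
def S23 {V : Type*} (G : SimpleGraph V) (v : Fin 5 → V) (i : Fin 5) : Set V :=
  {x | x ∉ Set.range v ∧ ∀ j, G.Adj x (v j) ↔ (j = i - 2 ∨ j = i ∨ j = i + 2)}

/-- Vertices outside `C` whose neighbourhood on `C` is all of `C` except `v i`. -/
def S4 {V : Type*} (G : SimpleGraph V) (v : Fin 5 → V) (i : Fin 5) : Set V :=
  {x | x ∉ Set.range v ∧ ∀ j, G.Adj x (v j) ↔ j ≠ i}

/-- Vertices outside `C` adjacent to all of `C`. -/
def S5 {V : Type*} (G : SimpleGraph V) (v : Fin 5 → V) : Set V :=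
  {x | x ∉ Set.range v ∧ ∀ j, G.Adj x (v j)}

lemma chair_of {V : Type*} (G : SimpleGraph V) (a b c d e : V)
    (hab : G.Adj a b) (hbc : G.Adj b c) (hcd : G.Adj c d) (hce : G.Adj c e)
    (hac : ¬G.Adj a c) (had : ¬G.Adj a d) (hae : ¬G.Adj a e)
    (hbd : ¬G.Adj b d) (hbe : ¬G.Adj b e) (hde : ¬G.Adj d e)
    (nac : a ≠ c) (nad : a ≠ d) (nae : a ≠ e) (nbd : b ≠ d) (nbe : b ≠ e) (nde : d ≠ e) :
    HasInducedCopy chair G := by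
  have nab := hab.ne; have nbc := hbc.ne; have ncd := hcd.ne; have nce := hce.ne
  refine ⟨![a, b, c, d, e], ?_, ?_⟩
  · intro x y hxy
    fin_cases x <;> fin_cases y <;> simp_all
  · have hG : G.Adj b a ∧ G.Adj c b ∧ G.Adj d c ∧ G.Adj e c ∧ ¬G.Adj c a ∧ ¬G.Adj d a ∧
        ¬G.Adj e a ∧ ¬G.Adj d b ∧ ¬G.Adj e b ∧ ¬G.Adj e d ∧ ∀ x, ¬ G.Adj x x :=
      ⟨hab.symm, hbc.symm, hcd.symm, hce.symm, fun h => hac h.symm, fun h => had h.symm,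
        fun h => hae h.symm, fun h => hbd h.symm, fun h => hbe h.symm, fun h => hde h.symm,
        fun x => G.loopless.irrefl x⟩
    obtain ⟨h1, h2, h3, h4, h5, h6, h7, h8, h9, h10, h11⟩ := hG
    intro x y
    fin_cases x <;> fin_cases y <;> simp_all [chair, SimpleGraph.fromRel_adj]

theorem stmt12 {V : Type*} [Fintype V] (G : SimpleGraph V)
    (hchair : ¬ HasInducedCopy chair G)
    (v : Fin 5 → V) (hC : IsInducedC5 G v) (i : Fin 5)
    (u w : V) (hu : u ∈ S4 G v i) (hw : w ∈ S4 G v i)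
    (hne : u ≠ w) (hnadj : ¬ G.Adj u w)
    (s : V)
    (hs : s ∈ S13 G v (i + 1) ∪ S13 G v (i - 1) ∪ S23 G v i ∪ S4 G v (i + 1)
        ∪ S4 G v (i - 1) ∪ S5 G v) :
    G.Adj s u ∨ G.Adj s w := by
  obtain ⟨hCinj, hCadj⟩ := hC
  obtain ⟨hur, huA⟩ := hu
  obtain ⟨hwr, hwA⟩ := hw
  by_contra hcon
  push_neg at hcon
  obtain ⟨hsu, hsw⟩ := hcon
  -- arithmetic facts in Fin 5
  have Fk2 : ∀ k : Fin 5, k + 2 ≠ k := by decide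
  have Fc1 : ∀ k : Fin 5, cycle5.Adj k (k + 1) := by simp only [cycle5, SimpleGraph.fromRel_adj]; decide
  have Fc2 : ∀ k : Fin 5, cycle5.Adj k (k - 1) := by simp only [cycle5, SimpleGraph.fromRel_adj]; decide
  have Fc3 : ∀ k : Fin 5, ¬ cycle5.Adj k (k + 2) := by simp only [cycle5, SimpleGraph.fromRel_adj]; decide
  have FA : ∀ k : Fin 5, k = k + 1 - 1 := by decide
  have FB : ∀ k : Fin 5, ¬(k - 1 = k + 1 - 1 ∨ k - 1 = k + 1 ∨ k - 1 = k + 1 + 1) := by decide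
  have FC : ∀ k : Fin 5, k = k - 1 + 1 := by decide
  have FD : ∀ k : Fin 5, ¬(k + 1 = k - 1 - 1 ∨ k + 1 = k - 1 ∨ k + 1 = k - 1 + 1) := by decide
  have FE : ∀ k : Fin 5, ¬(k + 1 = k - 2 ∨ k + 1 = k ∨ k + 1 = k + 2) := by decide
  have FG : ∀ k : Fin 5, k ≠ k + 2 := by decide
  have F1 : ∀ k : Fin 5, k + 1 ≠ k := by decide
  have F2 : ∀ k : Fin 5, k - 1 ≠ k := by decide
  have Fu : ¬ G.Adj u (v i) := by simp [huA i]
  have Fw : ¬ G.Adj w (v i) := by simp [hwA i]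
  have hviu : ¬ G.Adj (v i) u := fun h => Fu h.symm
  have hviw : ¬ G.Adj (v i) w := fun h => Fw h.symm
  have nviu : v i ≠ u := fun h => hur ⟨i, h⟩
  have nviw : v i ≠ w := fun h => hwr ⟨i, h⟩
  -- adjacency of u, w with v (i+1), v (i-1), v (i+2)
  have hu1 : G.Adj (v (i + 1)) u := ((huA (i + 1)).2 (F1 i)).symm
  have hw1 : G.Adj (v (i + 1)) w := ((hwA (i + 1)).2 (F1 i)).symm
  have hu1' : G.Adj (v (i - 1)) u := ((huA (i - 1)).2 (F2 i)).symm
  have hw1' : G.Adj (v (i - 1)) w := ((hwA (i - 1)).2 (F2 i)).symm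
  have hu2 : G.Adj (v (i + 2)) u := ((huA (i + 2)).2 (Fk2 i)).symm
  have hw2 : G.Adj (v (i + 2)) w := ((hwA (i + 2)).2 (Fk2 i)).symm
  -- cycle edges
  have e1 : G.Adj (v i) (v (i + 1)) := (hCadj i (i + 1)).2 (Fc1 i)
  have e2 : G.Adj (v i) (v (i - 1)) := (hCadj i (i - 1)).2 (Fc2 i)
  -- Generic step: if s is adjacent to v i and s ≠ u, w, then two chair constructions
  -- Config 1: s not adjacent to v (i+1)
  have config1 : G.Adj s (v i) → ¬ G.Adj s (v (i + 1)) → s ∉ Set.range v → False := by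
    intro hsvi hns hsr
    have nsu : s ≠ u := fun h => Fu (h ▸ hsvi)
    have nsw : s ≠ w := fun h => Fw (h ▸ hsvi)
    exact hchair (chair_of G s (v i) (v (i + 1)) u w hsvi e1 hu1 hw1 hns hsu hsw hviu hviw
      hnadj (fun h => hsr ⟨i + 1, h.symm⟩) nsu nsw nviu nviw hne)
  -- Config 2: s not adjacent to v (i-1)
  have config2 : G.Adj s (v i) → ¬ G.Adj s (v (i - 1)) → s ∉ Set.range v → False := by
    intro hsvi hns hsr
    have nsu : s ≠ u := fun h => Fu (h ▸ hsvi)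
    have nsw : s ≠ w := fun h => Fw (h ▸ hsvi)
    exact hchair (chair_of G s (v i) (v (i - 1)) u w hsvi e2 hu1' hw1' hns hsu hsw hviu hviw
      hnadj (fun h => hsr ⟨i - 1, h.symm⟩) nsu nsw nviu nviw hne)
  rcases hs with (((((hs | hs) | hs) | hs) | hs) | hs) <;> obtain ⟨hsr, hsA⟩ := hs
  · -- S13 (i+1): adjacent to v i, not adjacent to v (i-1): use config2
    exact config2 ((hsA i).2 (Or.inl (FA i))) (by rw [hsA (i - 1)]; exact FB i) hsr
  · -- S13 (i-1): adjacent to v i, not adjacent to v (i+1): use config1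
    exact config1 ((hsA i).2 (Or.inr (Or.inr (FC i)))) (by rw [hsA (i + 1)]; exact FD i) hsr
  · -- S23 i : adjacent to v i, not adjacent to v (i+1): use config1
    exact config1 ((hsA i).2 (Or.inr (Or.inl rfl))) (by rw [hsA (i + 1)]; exact FE i) hsr
  · -- S4 (i+1): adjacent to v i, not adjacent to v (i+1): use config1
    refine config1 ((hsA i).2 (F1 i).symm) ?_ hsr
    rw [hsA (i + 1)]
    simp
  · -- S4 (i-1): adjacent to v i, not adjacent to v (i-1): use config2
    refine config2 ((hsA i).2 (F2 i).symm) ?_ hsr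
    rw [hsA (i - 1)]
    simp
  · -- S5 : adjacent to everything; use v i, s, v (i+2), u, w
    have hsvi := hsA i
    have nsu : s ≠ u := fun h => Fu (h ▸ hsvi)
    have nsw : s ≠ w := fun h => Fw (h ▸ hsvi)
    have nii2 : v i ≠ v (i + 2) := fun h => FG i (hCinj h)
    have hni2 : ¬ G.Adj (v i) (v (i + 2)) := by
      rw [hCadj i (i + 2)]; exact Fc3 i
    exact hchair (chair_of G (v i) s (v (i + 2)) u w hsvi.symm (hsA (i + 2)) hu2 hw2
      hni2 hviu hviw hsu hsw hnadj nii2 nviu nviw nsu nsw hne)
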